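/- The 3×3 symmetric matrix A = (1/3)·[[1, 1, −1], [1, 1, 1], [−1, 1, 3]] satisfies all triangle inequalities A_ij + A_ik + A_jk ≥ −1, −A_ij + A_ik − A_jk ≥ −1, A_ij − A_ik − A_jk ≥ −1, −A_ij − A_ik + A_jk ≥ −1 (for 1 ≤ i < j < k ≤ 3), the pair inequalities −A_ii ≤ A_ij ≤ A_ii for i ≠ j, and A_ii ≤ 1 for all i, yet A is not positive semidefinite; consequently A does not lie in the convex hull of {x xᵀ : x ∈ {0, −1, 1}³}. -/

import Mathlib

open Matrix

lemma psd_convex : Convex ℝ {X : Matrix (Fin 3) (Fin 3) ℝ | X.PosSemidef} := by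
  intro X hX Y hY a b ha hb hab
  refine posSemidef_iff_dotProduct_mulVec.mpr ⟨?_, ?_⟩
  · show _ᴴ = _
    rw [conjTranspose_add, conjTranspose_smul, conjTranspose_smul, hX.1, hY.1,
      star_trivial, star_trivial]
  · intro v
    have h1 := (posSemidef_iff_dotProduct_mulVec.mp hX).2 v
    have h2 := (posSemidef_iff_dotProduct_mulVec.mp hY).2 v
    have : star v ⬝ᵥ ((a • X + b • Y) *ᵥ v)
        = a * (star v ⬝ᵥ (X *ᵥ v)) + b * (star v ⬝ᵥ (Y *ᵥ v)) := by
      simp [add_mulVec, smul_mulVec, dotProduct_add, dotProduct_smul, smul_eq_mul]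
    rw [this]
    positivity

theorem stmt_7 (A : Matrix (Fin 3) (Fin 3) ℝ)
    (hA : A = (1 / 3 : ℝ) • !![1, 1, -1; 1, 1, 1; -1, 1, 3]) :
    (∀ i j k : Fin 3, i < j → j < k →
        -1 ≤ A i j + A i k + A j k ∧
        -1 ≤ -A i j + A i k - A j k ∧
        -1 ≤ A i j - A i k - A j k ∧
        -1 ≤ -A i j - A i k + A j k) ∧
    (∀ i j : Fin 3, i ≠ j → -A i i ≤ A i j ∧ A i j ≤ A i i) ∧
    (∀ i : Fin 3, A i i ≤ 1) ∧
    ¬ A.PosSemidef ∧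
    A ∉ convexHull ℝ {X : Matrix (Fin 3) (Fin 3) ℝ | ∃ x : Fin 3 → ℝ,
        (∀ i, x i = 0 ∨ x i = -1 ∨ x i = 1) ∧ X = vecMulVec x x} := by
  subst hA
  have hnot : ¬ ((1 / 3 : ℝ) • !![1, 1, -1; 1, 1, 1; -1, 1, 3] :
      Matrix (Fin 3) (Fin 3) ℝ).PosSemidef := by
    rw [posSemidef_iff_dotProduct_mulVec]
    rintro ⟨-, h⟩
    have := h ![1, -1, 1]
    simp [dotProduct, mulVec, Fin.sum_univ_three] at this
    norm_num at this
  refine ⟨?_, ?_, ?_, hnot, ?_⟩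
  · intro i j k _ _
    fin_cases i <;> fin_cases j <;> fin_cases k <;> norm_num [Matrix.smul_apply]
  · intro i j _
    fin_cases i <;> fin_cases j <;> norm_num [Matrix.smul_apply]
  · intro i
    fin_cases i <;> norm_num [Matrix.smul_apply]
  · intro hmem
    apply hnot
    have hsub : {X : Matrix (Fin 3) (Fin 3) ℝ | ∃ x : Fin 3 → ℝ,
        (∀ i, x i = 0 ∨ x i = -1 ∨ x i = 1) ∧ X = vecMulVec x x}
        ⊆ {X : Matrix (Fin 3) (Fin 3) ℝ | X.PosSemidef} := by
      rintro X ⟨x, -, rfl⟩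
      refine posSemidef_iff_dotProduct_mulVec.mpr ⟨?_, fun v => ?_⟩
      · ext i j; simp [vecMulVec, conjTranspose, mul_comm]
      · have : star v ⬝ᵥ (vecMulVec x x *ᵥ v) = (x ⬝ᵥ v) * (x ⬝ᵥ v) := by
          simp only [dotProduct, vecMulVec, mulVec, Finset.sum_mul, Finset.mul_sum,
            star_trivial, Matrix.of_apply]
          rw [Finset.sum_comm]
          refine Finset.sum_congr rfl fun i _ => Finset.sum_congr rfl fun j _ => by ring
        rw [this]
        exact mul_self_nonneg _
    have := convexHull_min hsub psd_convex hmem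
    exact this
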